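/- Let ν = ν_{u(·)} be the product Bernoulli measure on X_N with means u ∈ (0,1)^{T_N^d}, and let L_G be the Glauber generator with flip rates c_x(η) = c_x^+(η)(1 − η_x) + c_x^−(η) η_x, where c_x^±(η) = a^± η_{x+n₁} η_{x+n₂} + b^± η_{x+n₁} + c^± ≥ 0 with constants a^±, b^±, c^± ∈ ℝ and distinct sites {n₁, n₂, 0} ⊂ ℤ^d. Then pointwise in η: (L_G^{*,ν} 1)(η) = Σ_{x∈T_N^d} ( c_x^+(η)/u_x − c_x^−(η)/(1−u_x) ) η̄_x, and this equals F(ω,u) + Σ_{x∈T_N^d} f^N(x,u) ω_x, where f^N(x,u) = (1−u_x) c_x^+(u) − u_x c_x^−(u) (with c_x^±(u) obtained by substituting u for η), and F(ω,u) = Σ_x a(u_x,u_{x+n₁},u_{x+n₂}) ω_x ω_{x+n₁} + Σ_x b(u_x,u_{x+n₁},u_{x+n₂}) ω_x ω_{x+n₂} + Σ_x c(u_x,u_{x+n₁},u_{x+n₂}) ω_x ω_{x+n₁} ω_{x+n₂}, with a(u_x,u_{x+n₁},u_{x+n₂}) = χ(u_{x+n₁})[ (a^+(1−u_x) − a^−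 u_x) u_{x+n₂} + b^+(1−u_x) − b^− u_x ], b(u_x,u_{x+n₁},u_{x+n₂}) = χ(u_{x+n₂}) (a^+(1−u_x) − a^− u_x) u_{x+n₁}, and c(u_x,u_{x+n₁},u_{x+n₂}) = χ(u_{x+n₁}) χ(u_{x+n₂}) (a^+(1−u_x) − a^− u_x). -/
import Mathlib


open Finset

/-- The discrete torus `T_N^d = (ℤ/Nℤ)^d`. -/
abbrev Torus (d N : ℕ) := Fin d → ZMod N

/-- The configuration space `X_N = {0,1}^{T_N^d}`. -/
abbrev Config (d N : ℕ) := Torus d N → Bool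

/-- The value in `{0,1} ⊂ ℝ` of an occupation variable. -/
noncomputable def bval : Bool → ℝ := fun b => if b then 1 else 0

/-- `flipC x η = η^x`, the configuration with the value at `x` flipped. -/
def flipC {d N : ℕ} (x : Torus d N) (η : Config d N) : Config d N :=
  Function.update η x (!(η x))

/-- The product Bernoulli measure with means `u`. -/
noncomputable def bern {d N : ℕ} [NeZero N] (u : Torus d N → ℝ) (η : Config d N) : ℝ :=
  ∏ x : Torus d N, (if η x then u x else 1 - u x)

/-- `χ(ρ) = ρ(1-ρ)`. -/
noncomputable def chi (ρ : ℝ) : ℝ := ρ * (1 - ρ)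

/-- The normalized centered occupation variable `ω_x = (η_x - u_x)/χ(u_x)`. -/
noncomputable def omg {d N : ℕ} (u : Torus d N → ℝ) (x : Torus d N) (η : Config d N) : ℝ :=
  (bval (η x) - u x) / chi (u x)

/-- The Glauber generator `L_G f (η) = Σ_x c_x(η) (f(η^x) - f(η))`. -/
noncomputable def glauber {d N : ℕ} [NeZero N] (c : Torus d N → Config d N → ℝ)
    (f : Config d N → ℝ) (η : Config d N) : ℝ :=
  ∑ x : Torus d N, c x η * (f (flipC x η) - f η)

/-- The creation/annihilation rate `c_x^±(η) = a^± η_{x+n₁} η_{x+n₂} + b^± η_{x+n₁} + c^±`. -/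
noncomputable def cRate {d N : ℕ} (a b c : ℝ) (n₁ n₂ : Torus d N)
    (x : Torus d N) (η : Config d N) : ℝ :=
  a * bval (η (x + n₁)) * bval (η (x + n₂)) + b * bval (η (x + n₁)) + c

/-- `c_x^±(u)`, i.e. `c_x^±` with `η` replaced by `u`. -/
noncomputable def cRateU {d N : ℕ} (a b c : ℝ) (n₁ n₂ : Torus d N)
    (u : Torus d N → ℝ) (x : Torus d N) : ℝ :=
  a * u (x + n₁) * u (x + n₂) + b * u (x + n₁) + c

/-- The full flip rate `c_x(η) = c_x^+(η)(1-η_x) + c_x^-(η) η_x`. -/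
noncomputable def flipRate {d N : ℕ} (ap bp cp am bm cm : ℝ) (n₁ n₂ : Torus d N)
    (x : Torus d N) (η : Config d N) : ℝ :=
  cRate ap bp cp n₁ n₂ x η * (1 - bval (η x)) + cRate am bm cm n₁ n₂ x η * bval (η x)

/-- `f^N(x,u) = (1-u_x) c_x^+(u) - u_x c_x^-(u)`. -/
noncomputable def fNterm {d N : ℕ} (ap bp cp am bm cm : ℝ) (n₁ n₂ : Torus d N)
    (u : Torus d N → ℝ) (x : Torus d N) : ℝ :=
  (1 - u x) * cRateU ap bp cp n₁ n₂ u x - u x * cRateU am bm cm n₁ n₂ u x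

section Aux
variable {d N : ℕ}

lemma flip_ne (x : Torus d N) (η : Config d N) {y : Torus d N} (h : y ≠ x) :
    flipC x η y = η y := Function.update_of_ne h _ _

lemma flip_self (x : Torus d N) (η : Config d N) : flipC x η x = !(η x) :=
  Function.update_self _ _ _

lemma flip_invol (x : Torus d N) : Function.Involutive (flipC x) := by
  intro η
  funext y
  by_cases h : y = x
  · subst h; simp [flipC, Function.update_self]
  · simp [flipC, Function.update_of_ne h]

lemma shift_ne (x : Torus d N) {n : Torus d N} (hn : n ≠ 0) : x + n ≠ x := by
  intro h
  exact hn (by simpa using h)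

lemma cRate_flip (a b c : ℝ) {n₁ n₂ : Torus d N} (h1 : n₁ ≠ 0) (h2 : n₂ ≠ 0)
    (x : Torus d N) (η : Config d N) :
    cRate a b c n₁ n₂ x (flipC x η) = cRate a b c n₁ n₂ x η := by
  unfold cRate
  rw [flip_ne x η (shift_ne x h1), flip_ne x η (shift_ne x h2)]

lemma bern_flip [NeZero N] (u : Torus d N → ℝ) (x : Torus d N) (η : Config d N) :
    bern u (flipC x η) * (if η x then u x else 1 - u x)
      = bern u η * (if η x then 1 - u x else u x) := by
  unfold bern
  rw [← Finset.mul_prod_erase Finset.univ _ (Finset.mem_univ x),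
      ← Finset.mul_prod_erase Finset.univ _ (Finset.mem_univ x)]
  have hP : ∏ y ∈ Finset.univ.erase x, (if flipC x η y then u y else 1 - u y)
      = ∏ y ∈ Finset.univ.erase x, (if η y then u y else 1 - u y) :=
    Finset.prod_congr rfl fun y hy => by rw [flip_ne x η (Finset.mem_erase.mp hy).1]
  rw [hP, flip_self]
  cases η x <;> simp <;> ring

end Aux
section Key
variable {d N : ℕ}

lemma key_pt [NeZero N] (ap bp cp am bm cm : ℝ) {n₁ n₂ : Torus d N}
    (h1 : n₁ ≠ 0) (h2 : n₂ ≠ 0) (u : Torus d N → ℝ) (hu : ∀ x, u x ∈ Set.Ioo (0:ℝ) 1)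
    (x : Torus d N) (η : Config d N) :
    flipRate ap bp cp am bm cm n₁ n₂ x (flipC x η) * bern u (flipC x η)
      - flipRate ap bp cp am bm cm n₁ n₂ x η * bern u η
    = (cRate ap bp cp n₁ n₂ x η / u x - cRate am bm cm n₁ n₂ x η / (1 - u x))
        * (bval (η x) - u x) * bern u η := by
  have hp : u x ≠ 0 := ne_of_gt (hu x).1
  have hq : 1 - u x ≠ 0 := sub_ne_zero.mpr (ne_of_gt (hu x).2)
  have hb := bern_flip u x η
  unfold flipRate
  rw [cRate_flip ap bp cp h1 h2, cRate_flip am bm cm h1 h2, flip_self]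
  cases hx : η x
  · rw [hx] at hb
    simp only [if_neg Bool.false_ne_true] at hb
    have hbf : bern u (flipC x η) = bern u η * u x / (1 - u x) := by
      rw [eq_div_iff hq]; exact hb
    rw [hbf]
    simp only [bval, Bool.not_false, if_pos, if_neg Bool.false_ne_true]
    field_simp
    ring
  · rw [hx] at hb
    simp only [if_pos] at hb
    have hbf : bern u (flipC x η) = bern u η * (1 - u x) / u x := by
      rw [eq_div_iff hp]; exact hb
    rw [hbf]
    simp only [bval, Bool.not_true, if_pos, if_neg Bool.false_ne_true]
    field_simp
    ring

end Key
section Key2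
variable {d N : ℕ}

lemma key2_pt (ap bp cp am bm cm : ℝ) (n₁ n₂ : Torus d N)
    (u : Torus d N → ℝ) (hu : ∀ x, u x ∈ Set.Ioo (0:ℝ) 1) (x : Torus d N) (η : Config d N) :
    (cRate ap bp cp n₁ n₂ x η / u x - cRate am bm cm n₁ n₂ x η / (1 - u x))
        * (bval (η x) - u x)
    = chi (u (x + n₁)) * ((ap * (1 - u x) - am * u x) * u (x + n₂)
          + bp * (1 - u x) - bm * u x) * omg u x η * omg u (x + n₁) η
      + chi (u (x + n₂)) * (ap * (1 - u x) - am * u x) * u (x + n₁)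
          * omg u x η * omg u (x + n₂) η
      + chi (u (x + n₁)) * chi (u (x + n₂)) * (ap * (1 - u x) - am * u x)
          * omg u x η * omg u (x + n₁) η * omg u (x + n₂) η
      + fNterm ap bp cp am bm cm n₁ n₂ u x * omg u x η := by
  have h1 : u x ≠ 0 := ne_of_gt (hu x).1
  have h2 : 1 - u x ≠ 0 := sub_ne_zero.mpr (ne_of_gt (hu x).2)
  have h3 : u (x + n₁) ≠ 0 := ne_of_gt (hu _).1
  have h4 : 1 - u (x + n₁) ≠ 0 := sub_ne_zero.mpr (ne_of_gt (hu _).2)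
  have h5 : u (x + n₂) ≠ 0 := ne_of_gt (hu _).1
  have h6 : 1 - u (x + n₂) ≠ 0 := sub_ne_zero.mpr (ne_of_gt (hu _).2)
  simp only [cRate, cRateU, fNterm, omg, chi]
  field_simp
  ring

end Key2
/-- Lemma 2.5: for the Glauber dynamics with rates of the product form,
`L_G^{*,ν} 1 (η) = Σ_x ( c_x^+(η)/u_x - c_x^-(η)/(1-u_x) ) η̄_x`
(stated in its equivalent weak form against arbitrary test functions `f`), and this quantity
equals `F(ω,u) + Σ_x f^N(x,u) ω_x` pointwise, with the explicit quadratic/cubic terms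
`a`, `b`, `c` of the paper. -/
theorem glauber_adjoint_one (d N : ℕ) [NeZero N] (hd : 1 ≤ d)
    (ap bp cp am bm cm : ℝ) (n₁ n₂ : Torus d N)
    (hn12 : n₁ ≠ n₂) (hn1 : n₁ ≠ 0) (hn2 : n₂ ≠ 0)
    (hratep : ∀ (x : Torus d N) (η : Config d N), 0 ≤ cRate ap bp cp n₁ n₂ x η)
    (hratem : ∀ (x : Torus d N) (η : Config d N), 0 ≤ cRate am bm cm n₁ n₂ x η)
    (u : Torus d N → ℝ) (hu : ∀ x, u x ∈ Set.Ioo (0:ℝ) 1) :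
    (∀ f : Config d N → ℝ,
      ∑ η : Config d N, glauber (flipRate ap bp cp am bm cm n₁ n₂) f η * bern u η
        = ∑ η : Config d N,
            (∑ x : Torus d N,
              (cRate ap bp cp n₁ n₂ x η / u x - cRate am bm cm n₁ n₂ x η / (1 - u x))
                * (bval (η x) - u x))
            * f η * bern u η)
    ∧ (∀ η : Config d N,
        (∑ x : Torus d N,
          (cRate ap bp cp n₁ n₂ x η / u x - cRate am bm cm n₁ n₂ x η / (1 - u x))
            * (bval (η x) - u x))
        = (∑ x : Torus d N,
            chi (u (x + n₁)) * ((ap * (1 - u x) - am * u x) * u (x + n₂)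
              + bp * (1 - u x) - bm * u x) * omg u x η * omg u (x + n₁) η)
          + (∑ x : Torus d N,
              chi (u (x + n₂)) * (ap * (1 - u x) - am * u x) * u (x + n₁)
                * omg u x η * omg u (x + n₂) η)
          + (∑ x : Torus d N,
              chi (u (x + n₁)) * chi (u (x + n₂)) * (ap * (1 - u x) - am * u x)
                * omg u x η * omg u (x + n₁) η * omg u (x + n₂) η)
          + ∑ x : Torus d N, fNterm ap bp cp am bm cm n₁ n₂ u x * omg u x η) := by
  set c : Torus d N → Config d N → ℝ := flipRate ap bp cp am bm cm n₁ n₂ with hc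
  set G : Torus d N → Config d N → ℝ := fun x η =>
    (cRate ap bp cp n₁ n₂ x η / u x - cRate am bm cm n₁ n₂ x η / (1 - u x))
      * (bval (η x) - u x) with hG
  constructor
  · intro f
    have reidx : ∀ x : Torus d N,
        ∑ η : Config d N, c x (flipC x η) * bern u (flipC x η) * f η
          = ∑ η : Config d N, c x η * bern u η * f (flipC x η) :=
      fun x => Fintype.sum_bijective (flipC x) (flip_invol x).bijective _
        (fun σ => c x σ * bern u σ * f (flipC x σ))
        (fun η => by beta_reduce; rw [flip_invol x η])
    calc ∑ η : Config d N, glauber c f η * bern u η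
        = ∑ η : Config d N, ∑ x : Torus d N, c x η * (f (flipC x η) - f η) * bern u η := by
          refine Finset.sum_congr rfl fun η _ => ?_
          rw [glauber, Finset.sum_mul]
      _ = ∑ x : Torus d N, ∑ η : Config d N, c x η * (f (flipC x η) - f η) * bern u η :=
          Finset.sum_comm
      _ = ∑ x : Torus d N, ∑ η : Config d N,
            (c x (flipC x η) * bern u (flipC x η) - c x η * bern u η) * f η := by
          refine Finset.sum_congr rfl fun x _ => ?_
          have e1 : ∀ η : Config d N, c x η * (f (flipC x η) - f η) * bern u η
              = c x η * bern u η * f (flipC x η) - c x η * bern u η * f η :=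
            fun η => by ring
          simp only [e1, sub_mul, Finset.sum_sub_distrib]
          rw [← reidx]
      _ = ∑ x : Torus d N, ∑ η : Config d N, G x η * bern u η * f η := by
          refine Finset.sum_congr rfl fun x _ => Finset.sum_congr rfl fun η _ => ?_
          rw [hc, key_pt ap bp cp am bm cm hn1 hn2 u hu x η]
      _ = ∑ η : Config d N, (∑ x : Torus d N, G x η) * f η * bern u η := by
          rw [Finset.sum_comm]
          refine Finset.sum_congr rfl fun η _ => ?_
          rw [Finset.sum_mul, Finset.sum_mul]
          exact Finset.sum_congr rfl fun x _ => by ring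
  · intro η
    rw [← Finset.sum_add_distrib, ← Finset.sum_add_distrib, ← Finset.sum_add_distrib]
    exact Finset.sum_congr rfl fun x _ => key2_pt ap bp cp am bm cm n₁ n₂ u hu x η
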